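/- Let n ∈ ℕ with n ≥ 2, let H ⊆ ℝ with |H| ≥ n+1, let ω = (ω₁, …, ω_n) : H → ℝⁿ be an n-dimensional positive Chebyshev system over H such that ω_{⟨n−1⟩} is an (n−1)-dimensional positive Chebyshev system over H, and let f : H → ℝ. Then for all pairwise distinct x₁, …, x_{n+1} ∈ H: Φ_{(ω,f)}(x₁, …, x_{n+1}) · Φ_{ω_{⟨n−1⟩}}(x₁, …, x_{n−1}) / (Φ_ω(x₁, …, x_{n−1}, x_n) · Φ_ω(x₁, …, x_{n−1}, x_{n+1})) = [x₁, …, x_{n−1}, x_{n+1}; f]_ω − [x₁, …, x_{n−1}, x_n; f]_ω. -/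

import Mathlib

/-- `Φ_ω(x₁,…,x_m) = det(ω_i(x_j))`. -/
noncomputable def Phi {m : ℕ} (ω : Fin m → ℝ → ℝ) (x : Fin m → ℝ) : ℝ :=
  Matrix.det (Matrix.of fun i j => ω i (x j))

/-- `ω` is an `m`-dimensional positive Chebyshev system over `H`. -/
def IsPosChebyshev {m : ℕ} (ω : Fin m → ℝ → ℝ) (H : Set ℝ) : Prop :=
  ∀ x : Fin m → ℝ, (∀ i, x i ∈ H) → StrictMono x → 0 < Phi ω x

/-- `f` is convex with respect to the `m`-dimensional system `ω` on `S`. -/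
def IsConvexWRT {m : ℕ} (ω : Fin m → ℝ → ℝ) (S : Set ℝ) (f : ℝ → ℝ) : Prop :=
  ∀ x : Fin (m + 1) → ℝ, (∀ i, x i ∈ S) → StrictMono x → 0 ≤ Phi (Fin.snoc ω f) x

/-- The generalized divided difference `[x₁,…,x_k; f]_{ω⟨k⟩}`:
the numerator replaces the last function `ω_k` by `f`. -/
noncomputable def divDiff {k : ℕ} (ω : Fin k → ℝ → ℝ) (f : ℝ → ℝ) (x : Fin k → ℝ) : ℝ :=
  Phi (fun i => if (i : ℕ) + 1 = k then f else ω i) x / Phi ω x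

open Matrix Fin

private lemma my_det_updateRow_sum {k : ℕ} {ι : Type*} [DecidableEq ι]
    (A : Matrix (Fin k) (Fin k) ℝ) (r : Fin k)
    (s : Finset ι) (c : ι → ℝ) (u : ι → Fin k → ℝ) :
    (A.updateRow r (fun j => ∑ i ∈ s, c i * u i j)).det
      = ∑ i ∈ s, c i * (A.updateRow r (u i)).det := by
  induction s using Finset.induction_on with
  | empty =>
      simp only [Finset.sum_empty]
      exact Matrix.det_eq_zero_of_row_eq_zero r (by simp)
  | insert a s hns ih =>
      have h : (fun j => ∑ i ∈ insert a s, c i * u i j)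
          = (c a • u a) + fun j => ∑ i ∈ s, c i * u i j := by
        funext j
        simp [Finset.sum_insert hns]
      rw [h, Matrix.det_updateRow_add, Matrix.det_updateRow_smul, ih,
        Finset.sum_insert hns]

private lemma my_det_row_single {k : ℕ} (A : Matrix (Fin (k+1)) (Fin (k+1)) ℝ)
    (h : ∀ j, A (Fin.last k) j = if j = Fin.last k then 1 else 0) :
    A.det = (A.submatrix Fin.castSucc Fin.castSucc).det := by
  rw [Matrix.det_succ_row A (Fin.last k), Finset.sum_eq_single (Fin.last k)]
  · rw [h, if_pos rfl, Fin.succAbove_last]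
    have : ((-1 : ℝ)) ^ ((Fin.last k : ℕ) + (Fin.last k : ℕ)) = 1 :=
      Even.neg_one_pow ⟨(Fin.last k : ℕ), rfl⟩
    rw [this]; ring
  · intro j _ hj
    rw [h, if_neg hj, mul_zero, zero_mul]
  · simp

private theorem key_identity (m : ℕ) (ω : Fin (m+2) → ℝ → ℝ) (f : ℝ → ℝ) (x : Fin (m+3) → ℝ)
    (hB : Phi ω (fun j => x j.castSucc) ≠ 0) :
    Phi (Fin.snoc ω f) x
        * Phi (fun i : Fin (m+1) => ω i.castSucc) (fun i => x i.castSucc.castSucc)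
      = Phi (fun i : Fin (m+2) => if (i:ℕ)+1 = m+2 then f else ω i)
            (fun j => x (if (j:ℕ) < m+1 then j.castSucc else Fin.last (m+2)))
          * Phi ω (fun j => x j.castSucc)
        - Phi (fun i : Fin (m+2) => if (i:ℕ)+1 = m+2 then f else ω i) (fun j => x j.castSucc)
          * Phi ω (fun j => x (if (j:ℕ) < m+1 then j.castSucc else Fin.last (m+2))) := by
  classical
  set idx : Fin (m+2) → Fin (m+3) :=
    fun j => if (j:ℕ) < m+1 then j.castSucc else Fin.last (m+2) with hidx
  set A0 : Matrix (Fin (m+3)) (Fin (m+3)) ℝ :=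
    Matrix.of (fun (i j : Fin (m+3)) => (Fin.snoc ω f : Fin (m+3) → ℝ → ℝ) i (x j)) with hA0
  set B1 : Matrix (Fin (m+2)) (Fin (m+2)) ℝ :=
    Matrix.of (fun i j => (if (i:ℕ)+1 = m+2 then f else ω i) (x (idx j))) with hB1
  set B2 : Matrix (Fin (m+2)) (Fin (m+2)) ℝ :=
    Matrix.of (fun i j => (if (i:ℕ)+1 = m+2 then f else ω i) (x j.castSucc)) with hB2
  set M : Matrix (Fin (m+3)) (Fin (m+3)) ℝ :=
    Matrix.of ((Fin.snoc (fun k : Fin (m+2) => fun j : Fin (m+3) => ω k (x j))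
      (fun j => if j = Fin.last (m+2) then (1:ℝ) else 0) : Fin (m+3) → Fin (m+3) → ℝ)) with hM
  set P : ℝ := Phi (fun i : Fin (m+1) => ω i.castSucc) (fun i => x i.castSucc.castSucc) with hP
  set Bv : ℝ := Phi ω (fun j => x j.castSucc) with hBv
  set Cv : ℝ := Phi ω (fun j => x (idx j)) with hCv
  -- the three linear functionals of the "last row"
  set Dd : (Fin (m+3) → ℝ) → ℝ :=
    fun v => (A0.updateRow (Fin.last (m+2)) v).det with hDd
  set N1 : (Fin (m+3) → ℝ) → ℝ :=
    fun v => (B1.updateRow (Fin.last (m+1)) (fun j => v (idx j))).det with hN1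
  set N2 : (Fin (m+3) → ℝ) → ℝ :=
    fun v => (B2.updateRow (Fin.last (m+1)) (fun j => v j.castSucc)).det with hN2
  have hrowA : ∀ k : Fin (m+2), A0 k.castSucc = fun j => ω k (x j) := by
    intro k; funext j; simp [hA0]
  have hMc : ∀ k : Fin (m+2), M k.castSucc = fun j => ω k (x j) := by
    intro k; funext j; simp [hM]
  have hMl : M (Fin.last (m+2)) = fun j => if j = Fin.last (m+2) then (1:ℝ) else 0 := by
    funext j; simp [hM]
  have hcs_ne_last : ∀ k : Fin (m+2), (k.castSucc : Fin (m+3)) ≠ Fin.last (m+2) :=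
    fun k => (Fin.castSucc_lt_last k).ne
  have hcs_ne_last' : ∀ k : Fin (m+1), (k.castSucc : Fin (m+2)) ≠ Fin.last (m+1) :=
    fun k => (Fin.castSucc_lt_last k).ne
  -- L vanishes on each row of M
  have hLrow : ∀ i : Fin (m+3), Dd (M i) * P - N1 (M i) * Bv + N2 (M i) * Cv = 0 := by
    intro i
    refine Fin.lastCases ?_ ?_ i
    · -- i = last : the row is e_last
      rw [hMl]
      have hD : Dd (fun j => if j = Fin.last (m+2) then (1:ℝ) else 0) = Bv := by
        simp only [hDd]
        rw [my_det_row_single _ (fun j => by simp)]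
        rw [hBv]
        unfold Phi
        congr 1
        funext a b
        rw [Matrix.submatrix_apply, Matrix.updateRow_ne (hcs_ne_last a)]
        simp [hA0]
      have hN1e : N1 (fun j => if j = Fin.last (m+2) then (1:ℝ) else 0) = P := by
        simp only [hN1]
        have hrow : (fun j : Fin (m+2) =>
            if idx j = Fin.last (m+2) then (1:ℝ) else 0)
            = fun j => if j = Fin.last (m+1) then (1:ℝ) else 0 := by
          funext j
          by_cases hj : (j:ℕ) < m+1
          · have h1 : idx j = j.castSucc := by rw [hidx]; simp [hj]
            rw [h1, if_neg (hcs_ne_last j),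
              if_neg (by intro hc; rw [hc] at hj; simp at hj)]
          · have h1 : idx j = Fin.last (m+2) := by rw [hidx]; simp [hj]
            have h2 : j = Fin.last (m+1) := by
              apply Fin.ext; have := j.isLt; simp; omega
            rw [h1, if_pos rfl, h2, if_pos rfl]
        rw [hrow]
        rw [my_det_row_single _ (fun j => by simp)]
        rw [hP]; unfold Phi
        congr 1
        funext a b
        rw [Matrix.submatrix_apply, Matrix.updateRow_ne (hcs_ne_last' a)]
        have h1 : ((a.castSucc : Fin (m+2)) : ℕ) + 1 ≠ m + 2 := by
          have := a.isLt; simp [Fin.coe_castSucc]; omega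
        have h2 : idx b.castSucc = b.castSucc.castSucc := by
          rw [hidx]; simp [b.isLt]
        simp [hB1, h1, h2]
        rw [if_neg (by have := a.isLt; omega)]
      have hN2e : N2 (fun j => if j = Fin.last (m+2) then (1:ℝ) else 0) = 0 := by
        simp only [hN2]
        apply Matrix.det_eq_zero_of_row_eq_zero (Fin.last (m+1))
        intro j
        rw [Matrix.updateRow_self, if_neg (hcs_ne_last j)]
      rw [hD, hN1e, hN2e]; ring
    · -- i = castSucc k
      intro k
      rw [hMc]
      have hD : Dd (fun j => ω k (x j)) = 0 := by
        simp only [hDd]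
        apply Matrix.det_zero_of_row_eq (hcs_ne_last k)
        rw [Matrix.updateRow_ne (hcs_ne_last k), Matrix.updateRow_self, hrowA]
      by_cases hk : (k:ℕ) < m+1
      · have hkl : k ≠ Fin.last (m+1) := by
          intro hc; rw [hc] at hk; simp at hk
        have hrowB1 : B1 k = fun j => ω k (x (idx j)) := by
          funext j; simp only [hB1, Matrix.of_apply]
          rw [if_neg (by omega)]
        have hrowB2 : B2 k = fun j => ω k (x j.castSucc) := by
          funext j; simp only [hB2, Matrix.of_apply]
          rw [if_neg (by omega)]
        have h1 : N1 (fun j => ω k (x j)) = 0 := by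
          simp only [hN1]
          apply Matrix.det_zero_of_row_eq hkl
          rw [Matrix.updateRow_ne hkl, Matrix.updateRow_self, hrowB1]
        have h2 : N2 (fun j => ω k (x j)) = 0 := by
          simp only [hN2]
          apply Matrix.det_zero_of_row_eq hkl
          rw [Matrix.updateRow_ne hkl, Matrix.updateRow_self, hrowB2]
        rw [hD, h1, h2]; ring
      · have hkl : k = Fin.last (m+1) := by
          apply Fin.ext; have := k.isLt; simp; omega
        subst hkl
        have h1 : N1 (fun j => ω (Fin.last (m+1)) (x j)) = Cv := by
          simp only [hN1]; rw [hCv]; unfold Phi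
          congr 1
          funext a b
          by_cases ha : a = Fin.last (m+1)
          · subst ha; rw [Matrix.updateRow_self]; simp
          · rw [Matrix.updateRow_ne ha]
            simp only [hB1, Matrix.of_apply]
            rw [if_neg (by
              intro hc
              apply ha; apply Fin.ext; simp; omega)]
        have h2 : N2 (fun j => ω (Fin.last (m+1)) (x j)) = Bv := by
          simp only [hN2]; rw [hBv]; unfold Phi
          congr 1
          funext a b
          by_cases ha : a = Fin.last (m+1)
          · subst ha; rw [Matrix.updateRow_self]; simp
          · rw [Matrix.updateRow_ne ha]
            simp only [hB2, Matrix.of_apply]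
            rw [if_neg (by
              intro hc
              apply ha; apply Fin.ext; simp; omega)]
        rw [hD, h1, h2]; ring
  -- det M = Bv ≠ 0
  have hMdet : M.det = Bv := by
    rw [my_det_row_single _ (fun j => by rw [hMl])]
    rw [hBv]; unfold Phi
    congr 1
    funext a b
    rw [Matrix.submatrix_apply, hMc]
    simp
  have hMunit : IsUnit M.det := by
    rw [hMdet]; exact isUnit_iff_ne_zero.mpr hB
  -- express the f-row in terms of the rows of M
  set v : Fin (m+3) → ℝ := fun j => f (x j) with hv
  set c : Fin (m+3) → ℝ := v ᵥ* M⁻¹ with hc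
  have hvsum : ∀ j, v j = ∑ i, c i * M i j := by
    intro j
    have h1 : c ᵥ* M = v := by
      rw [hc, Matrix.vecMul_vecMul, Matrix.nonsing_inv_mul M hMunit, Matrix.vecMul_one]
    have h2 := congrFun h1 j
    rw [← h2]
    simp [Matrix.vecMul, dotProduct]
  -- linearity
  have hDv : Dd v = ∑ i, c i * Dd (M i) := by
    simp only [hDd]
    rw [show v = fun j => ∑ i, c i * M i j from funext hvsum]
    exact my_det_updateRow_sum A0 _ Finset.univ c M
  have hN1v : N1 v = ∑ i, c i * N1 (M i) := by
    simp only [hN1]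
    have : (fun j : Fin (m+2) => v (idx j))
        = fun j => ∑ i, c i * (fun j' : Fin (m+2) => M i (idx j')) j := by
      funext j; exact hvsum (idx j)
    rw [this]
    exact my_det_updateRow_sum B1 _ Finset.univ c (fun i j => M i (idx j))
  have hN2v : N2 v = ∑ i, c i * N2 (M i) := by
    simp only [hN2]
    have : (fun j : Fin (m+2) => v j.castSucc)
        = fun j => ∑ i, c i * (fun j' : Fin (m+2) => M i j'.castSucc) j := by
      funext j; exact hvsum j.castSucc
    rw [this]
    exact my_det_updateRow_sum B2 _ Finset.univ c (fun i j => M i j.castSucc)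
  have hLv : Dd v * P - N1 v * Bv + N2 v * Cv = 0 := by
    rw [hDv, hN1v, hN2v, Finset.sum_mul, Finset.sum_mul, Finset.sum_mul,
      ← Finset.sum_sub_distrib, ← Finset.sum_add_distrib]
    apply Finset.sum_eq_zero
    intro i _
    linear_combination c i * hLrow i
  -- identify the functionals at v with the quantities in the statement
  have hDfin : Dd v = Phi (Fin.snoc ω f) x := by
    simp only [hDd]
    have : v = A0 (Fin.last (m+2)) := by
      funext j; simp [hA0, hv]
    rw [this, Matrix.updateRow_eq_self]
    unfold Phi; rfl
  have hN1fin : N1 v = Phi (fun i : Fin (m+2) => if (i:ℕ)+1 = m+2 then f else ω i)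
      (fun j => x (idx j)) := by
    simp only [hN1]
    have : (fun j : Fin (m+2) => v (idx j)) = B1 (Fin.last (m+1)) := by
      funext j; simp [hB1, hv]
    rw [this, Matrix.updateRow_eq_self]
    unfold Phi; rfl
  have hN2fin : N2 v = Phi (fun i : Fin (m+2) => if (i:ℕ)+1 = m+2 then f else ω i)
      (fun j => x j.castSucc) := by
    simp only [hN2]
    have : (fun j : Fin (m+2) => v j.castSucc) = B2 (Fin.last (m+1)) := by
      funext j; simp [hB2, hv]
    rw [this, Matrix.updateRow_eq_self]
    unfold Phi; rfl
  rw [← hDfin, ← hN1fin, ← hN2fin]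
  linarith [hLv]

private lemma my_phi_ne_zero {k : ℕ} {ω : Fin k → ℝ → ℝ} {H : Set ℝ}
    (hω : IsPosChebyshev ω H) {x : Fin k → ℝ}
    (hx : ∀ i, x i ∈ H) (hinj : Function.Injective x) : Phi ω x ≠ 0 := by
  classical
  set σ := Tuple.sort x with hσ
  have hmono : StrictMono (x ∘ σ) :=
    (Tuple.monotone_sort x).strictMono_of_injective (hinj.comp σ.injective)
  have hpos : 0 < Phi ω (x ∘ σ) := hω _ (fun i => hx _) hmono
  have hdet : Phi ω (x ∘ σ) = (Equiv.Perm.sign σ : ℝ) * Phi ω x := by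
    have h : (Matrix.of fun i j => ω i ((x ∘ σ) j))
        = (Matrix.of fun i j => ω i (x j)).submatrix id σ := rfl
    unfold Phi
    rw [h, Matrix.det_permute']
  intro h0
  rw [hdet, h0, mul_zero] at hpos
  exact lt_irrefl _ hpos

/-- The identity \eqref{fid1} (Wąsowicz):
`Φ_{(ω,f)}(x₁,…,x_{n+1}) · Φ_{ω⟨n-1⟩}(x₁,…,x_{n-1}) /
  (Φ_ω(x₁,…,x_{n-1},x_n) · Φ_ω(x₁,…,x_{n-1},x_{n+1}))
 = [x₁,…,x_{n-1},x_{n+1}; f]_ω - [x₁,…,x_{n-1},x_n; f]_ω`. -/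
theorem wasowicz_identity (n : ℕ) (hn : 2 ≤ n) (H : Set ℝ)
    (hH : n + 1 ≤ H.ncard ∨ H.Infinite)
    (ω : Fin n → ℝ → ℝ) (f : ℝ → ℝ)
    (hω : IsPosChebyshev ω H)
    (hω' : IsPosChebyshev (fun i : Fin (n - 1) => ω (Fin.castLE (by omega) i)) H)
    (x : Fin (n + 1) → ℝ) (hxH : ∀ i, x i ∈ H) (hinj : Function.Injective x) :
    Phi (Fin.snoc ω f) x *
        Phi (fun i : Fin (n - 1) => ω (Fin.castLE (by omega) i))
          (fun i : Fin (n - 1) => x (Fin.castLE (by omega) i)) /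
      (Phi ω (fun i : Fin n => if (i : ℕ) + 1 < n then x (Fin.castSucc i) else x ⟨n - 1, by omega⟩) *
        Phi ω (fun i : Fin n => if (i : ℕ) + 1 < n then x (Fin.castSucc i) else x (Fin.last n)))
    = divDiff ω f
         (fun i : Fin n => if (i : ℕ) + 1 < n then x (Fin.castSucc i) else x (Fin.last n))
      - divDiff ω f
         (fun i : Fin n => if (i : ℕ) + 1 < n then x (Fin.castSucc i) else x ⟨n - 1, by omega⟩) := by
  classical
  obtain ⟨m, rfl⟩ : ∃ m, n = m + 2 := ⟨n - 2, by omega⟩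
  have hBne : Phi ω (fun j : Fin (m+2) => x j.castSucc) ≠ 0 := by
    apply my_phi_ne_zero hω (fun i => hxH _)
    intro a b hab
    exact Fin.castSucc_injective _ (hinj hab)
  have hCne : Phi ω
      (fun j : Fin (m+2) => x (if (j:ℕ) < m+1 then j.castSucc else Fin.last (m+2))) ≠ 0 := by
    apply my_phi_ne_zero hω (fun i => hxH _)
    intro a b hab
    have h2 : (if (a:ℕ) < m+1 then a.castSucc else Fin.last (m+2))
        = (if (b:ℕ) < m+1 then b.castSucc else Fin.last (m+2)) := hinj hab
    by_cases ha : (a:ℕ) < m+1 <;> by_cases hb : (b:ℕ) < m+1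
    · rw [if_pos ha, if_pos hb] at h2
      exact Fin.castSucc_injective _ h2
    · rw [if_pos ha, if_neg hb] at h2
      have := congrArg Fin.val h2
      simp only [Fin.coe_castSucc, Fin.val_last] at this
      omega
    · rw [if_neg ha, if_pos hb] at h2
      have := congrArg Fin.val h2
      simp only [Fin.coe_castSucc, Fin.val_last] at this
      omega
    · apply Fin.ext
      have h3 := a.isLt
      have h4 := b.isLt
      omega
  have e₁ : (fun i : Fin (m+2) =>
        if (i:ℕ) + 1 < m+2 then x (Fin.castSucc i) else x (Fin.last (m+2)))
      = fun j : Fin (m+2) => x (if (j:ℕ) < m+1 then j.castSucc else Fin.last (m+2)) := by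
    funext i
    by_cases h : (i:ℕ) + 1 < m+2
    · rw [if_pos h, if_pos (by omega)]
    · rw [if_neg h, if_neg (by omega)]
  have e₂ : (fun i : Fin (m+2) =>
        if (i:ℕ) + 1 < m+2 then x (Fin.castSucc i) else x ⟨m+2-1, by omega⟩)
      = fun j : Fin (m+2) => x j.castSucc := by
    funext i
    split_ifs with h
    · rfl
    · congr 1
      apply Fin.ext
      have := i.isLt
      simp only [Fin.coe_castSucc]
      omega
  have e₃ : Phi (fun i : Fin (m+2-1) => ω (Fin.castLE (by omega) i))
        (fun i : Fin (m+2-1) => x (Fin.castLE (by omega) i))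
      = Phi (fun i : Fin (m+1) => ω i.castSucc) (fun i => x i.castSucc.castSucc) := rfl
  rw [e₁, e₂, e₃]
  have key := key_identity m ω f x hBne
  simp only [divDiff]
  rw [key]
  field_simp
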